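/- Let F be a field, let M, N be p×q matrices over F, and let b, c ∈ F^p. Suppose the linear systems M·x = b and N·x = c are both consistent (each has at least one solution) and are solution equivalent, i.e., {x ∈ F^q : M·x = b} = {x ∈ F^q : N·x = c}. Then the two systems are row equivalent: there exists an invertible p×p matrix P with N = P * M and c = P·b. -/

import Mathlib

open Matrix

/-- `E.IsPivot i j` : sweeping row `i` of `E` from the left, the first nonzero
entry is met at column `j` (i.e. `E i j ≠ 0` and all entries to its left vanish). -/
def Matrix.IsPivot {F : Type*} [Field F] {p q : ℕ}
    (E : Matrix (Fin p) (Fin q) F) (i : Fin p) (j : Fin q) : Prop :=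
  E i j ≠ 0 ∧ ∀ j' : Fin q, j' < j → E i j' = 0

/-- `E` is in row reduced echelon form:
(1) the first nonzero entry of every nonzero row is `1`;
(2) a pivot is the only nonzero entry of its column;
(3) a pivot in a lower row lies in a column strictly to the right;
(4) zero rows are at the bottom. -/
def Matrix.IsRREF {F : Type*} [Field F] {p q : ℕ}
    (E : Matrix (Fin p) (Fin q) F) : Prop :=
  (∀ i j, E.IsPivot i j → E i j = 1) ∧
  (∀ i j, E.IsPivot i j → ∀ i' : Fin p, i' ≠ i → E i' j = 0) ∧
  (∀ i₁ j₁ i₂ j₂, E.IsPivot i₁ j₁ → E.IsPivot i₂ j₂ → i₁ < i₂ → j₁ < j₂) ∧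
  (∀ i i' : Fin p, i ≤ i' → (∀ j, E i j = 0) → ∀ j, E i' j = 0)

/-- Two `p × q` matrices are row equivalent iff one is obtained from the
other by left multiplication by an invertible `p × p` matrix. -/
def Matrix.RowEquiv {F : Type*} [Field F] {p q : ℕ}
    (M N : Matrix (Fin p) (Fin q) F) : Prop :=
  ∃ P : Matrix (Fin p) (Fin p) F, IsUnit P ∧ N = P * M

/-- If two linear maps into a finite-dimensional space have the same kernel,
then they differ by an automorphism of the codomain. -/
theorem exists_equiv_comp_of_ker_eq {F V W : Type*} [Field F]
    [AddCommGroup V] [Module F V] [AddCommGroup W] [Module F W]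
    [FiniteDimensional F W] (f g : V →ₗ[F] W) (hker : LinearMap.ker f = LinearMap.ker g) :
    ∃ e : W ≃ₗ[F] W, ∀ x, e (f x) = g x := by
  obtain ⟨C₁, h₁⟩ := Submodule.exists_isCompl (LinearMap.range f)
  obtain ⟨C₂, h₂⟩ := Submodule.exists_isCompl (LinearMap.range g)
  let φ : LinearMap.range f ≃ₗ[F] LinearMap.range g :=
    f.quotKerEquivRange.symm.trans
      ((Submodule.quotEquivOfEq _ _ hker).trans g.quotKerEquivRange)
  have hφ : ∀ x, (φ ⟨f x, LinearMap.mem_range_self f x⟩ : W) = g x := by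
    intro x
    have h1 : f.quotKerEquivRange.symm ⟨f x, LinearMap.mem_range_self f x⟩ =
        Submodule.Quotient.mk x := by
      apply f.quotKerEquivRange.injective
      simp [LinearMap.quotKerEquivRange_apply_mk]
    simp [φ, h1, Submodule.quotEquivOfEq_mk, LinearMap.quotKerEquivRange_apply_mk]
  have hrank : Module.finrank F C₁ = Module.finrank F C₂ := by
    have e1 := Submodule.finrank_add_eq_of_isCompl h₁
    have e2 := Submodule.finrank_add_eq_of_isCompl h₂
    have := φ.finrank_eq
    omega
  let ψ : C₁ ≃ₗ[F] C₂ := LinearEquiv.ofFinrankEq _ _ hrank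
  refine ⟨(Submodule.prodEquivOfIsCompl _ _ h₁).symm.trans
    ((φ.prodCongr ψ).trans (Submodule.prodEquivOfIsCompl _ _ h₂)), fun x => ?_⟩
  have h3 : (Submodule.prodEquivOfIsCompl _ _ h₁).symm (f x) =
      (⟨f x, LinearMap.mem_range_self f x⟩, 0) := by
    apply (Submodule.prodEquivOfIsCompl _ _ h₁).injective
    simp [Submodule.coe_prodEquivOfIsCompl', Submodule.projection_add_projection_eq_self]
  simp [h3, Submodule.coe_prodEquivOfIsCompl', hφ]

/-- Consistent, solution-equivalent linear systems are row equivalent. -/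
theorem rowEquiv_of_solution_equivalent {F : Type*} [Field F] {p q : ℕ}
    (M N : Matrix (Fin p) (Fin q) F) (b c : Fin p → F)
    (hMb : ∃ x : Fin q → F, M.mulVec x = b)
    (hNc : ∃ x : Fin q → F, N.mulVec x = c)
    (hsol : {x : Fin q → F | M.mulVec x = b} = {x : Fin q → F | N.mulVec x = c}) :
    ∃ P : Matrix (Fin p) (Fin p) F, IsUnit P ∧ N = P * M ∧ c = P.mulVec b := by
  obtain ⟨x₀, hx₀⟩ := hMb
  have hx₀' : N.mulVec x₀ = c := by
    have : x₀ ∈ {x : Fin q → F | N.mulVec x = c} := hsol ▸ hx₀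
    exact this
  have hmem : ∀ x, M.mulVec x = b ↔ N.mulVec x = c := fun x =>
    ⟨fun h => (hsol ▸ h : x ∈ {x | N.mulVec x = c}),
     fun h => (hsol.symm ▸ h : x ∈ {x | M.mulVec x = b})⟩
  have hker : LinearMap.ker M.mulVecLin = LinearMap.ker N.mulVecLin := by
    ext y
    simp only [LinearMap.mem_ker, mulVecLin_apply]
    constructor
    · intro h
      have := (hmem (x₀ + y)).mp (by rw [mulVec_add, hx₀, h, add_zero])
      rw [mulVec_add, hx₀'] at this
      exact add_eq_left.mp this
    · intro h
      have := (hmem (x₀ + y)).mpr (by rw [mulVec_add, hx₀', h, add_zero])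
      rw [mulVec_add, hx₀] at this
      exact add_eq_left.mp this
  obtain ⟨e, he⟩ := exists_equiv_comp_of_ker_eq M.mulVecLin N.mulVecLin hker
  refine ⟨LinearMap.toMatrix' e.toLinearMap, ?_, ?_, ?_⟩
  · refine (Matrix.isUnit_iff_isUnit_det _).mpr (Matrix.isUnit_det_of_right_inverse (B := LinearMap.toMatrix' e.symm.toLinearMap) ?_)
    rw [← LinearMap.toMatrix'_comp]
    simp
  · apply Matrix.toLin'.injective
    rw [Matrix.toLin'_mul, Matrix.toLin'_toMatrix']
    refine LinearMap.ext fun x => ?_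
    simpa [Matrix.toLin'_apply] using (he x).symm
  · have hm : ∀ v, (LinearMap.toMatrix' e.toLinearMap).mulVec v = e v := by
      intro v
      rw [← Matrix.toLin'_apply, Matrix.toLin'_toMatrix']
      rfl
    rw [← hx₀', ← hx₀, hm (M.mulVec x₀), ← mulVecLin_apply, ← mulVecLin_apply, he x₀]
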